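/- Let p, q be natural numbers, A ∈ ℝ^{(p+q)×(p+q)} positive semidefinite with blocks A₁₁ ∈ ℝ^{p×p}, A₁₂ ∈ ℝ^{p×q}, A₂₁ = A₁₂ᵀ, A₂₂ ∈ ℝ^{q×q}, and C ∈ ℝ^{q×q} positive semidefinite. Let T : ℝ^{p+q} × ℝ^q → ℝ^{p+q} be the linear map T((x₁, x₂), z) = (x₁, x₂ + z), where x₁ ∈ ℝ^p, x₂ ∈ ℝ^q. Then the pushforward of the product measure N(0, A) ⊗ N(0, C) under T equals N(0, B), where B ∈ ℝ^{(p+q)×(p+q)} has blocks B₁₁ = A₁₁, B₁₂ = A₁₂, B₂₁ = A₂₁, B₂₂ = A₂₂ + C. (Finite-dimensional form of Proposition 1: if f_s ~ GP(0, k_s) and f_t | f_s ~ GP(f_s, k_t), then at any finite collection of source points and target points the joint law of (f_s at the source points, f_t at the target points) is Gaussian with the hierarchical covariance in which the target block receives the additive term k_t.) -/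

import Mathlib

open MeasureTheory ProbabilityTheory Matrix

open Classical in
/-- A measurable square root of a positive semidefinite real matrix
(junk value `0` if the matrix is not positive semidefinite). -/
noncomputable def matSqrt {ι : Type*} [Fintype ι] [DecidableEq ι]
    (S : Matrix ι ι ℝ) : Matrix ι ι ℝ :=
  if h : S.PosSemidef then
    h.1.eigenvectorUnitary.1 * diagonal ((↑) ∘ (√·) ∘ h.1.eigenvalues) *
      (star h.1.eigenvectorUnitary : Matrix ι ι ℝ)
  else 0

/-- The standard Gaussian measure `N(0, I)` on `ι → ℝ`. -/
noncomputable def stdGaussian (ι : Type*) [Fintype ι] : Measure (ι → ℝ) :=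
  Measure.pi fun _ => gaussianReal 0 1

/-- The multivariate Gaussian measure `N(μ, S)` on `ι → ℝ`, for `S` positive
semidefinite, realized as the pushforward of the standard Gaussian under the
affine map `x ↦ μ + √S x`. -/
noncomputable def multiGaussian {ι : Type*} [Fintype ι] [DecidableEq ι]
    (μ : ι → ℝ) (S : Matrix ι ι ℝ) : Measure (ι → ℝ) :=
  (stdGaussian ι).map fun x => μ + (matSqrt S).mulVec x

set_option linter.unusedSectionVars false

open scoped ENNReal

section aux



section basic
variable {ι α : Type*} [Fintype ι] [Fintype α]

lemma measurable_mulVec (M : Matrix ι α ℝ) : Measurable (M.mulVec) := by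
  refine measurable_pi_lambda _ fun i => ?_
  simp only [Matrix.mulVec, dotProduct]
  exact Finset.measurable_sum _ fun j _ => (measurable_pi_apply j).const_mul _

instance (ι : Type*) [Fintype ι] : IsProbabilityMeasure (stdGaussian ι) := by
  unfold _root_.stdGaussian; infer_instance

/-- lintegral Fubini over `Fin n` pi measures. -/
lemma lintegral_fin_prod {n : ℕ} (μ : Fin n → Measure ℝ) [∀ i, SigmaFinite (μ i)]
    (g : Fin n → ℝ → ℝ≥0∞) (hg : ∀ i, Measurable (g i)) :
    ∫⁻ x : Fin n → ℝ, ∏ i, g i (x i) ∂Measure.pi μ = ∏ i, ∫⁻ y, g i y ∂μ i := by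
  induction n with
  | zero =>
    rw [Measure.pi_of_empty]
    simp
  | succ n ih =>
    have h := (measurePreserving_piFinSuccAbove μ 0).symm
    have hmeas : Measurable fun x : Fin (n+1) → ℝ => ∏ i, g i (x i) :=
      Finset.measurable_prod _ fun i _ => (hg i).comp (measurable_pi_apply i)
    rw [← h.lintegral_comp hmeas]
    simp_rw [MeasurableEquiv.piFinSuccAbove_symm_apply, Fin.insertNthEquiv,
      Fin.prod_univ_succ, Fin.insertNth_zero]
    simp only [Fin.zero_succAbove, Function.comp_def, Fin.cons_zero, Fin.cons_succ,
      Equiv.coe_fn_mk, cast_eq]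
    have h1 : Measurable fun y : ℝ => g 0 y := hg 0
    have h2 : Measurable fun y : Fin n → ℝ => ∏ i : Fin n, g i.succ (y i) :=
      Finset.measurable_prod _ fun i _ => (hg i.succ).comp (measurable_pi_apply i)
    rw [lintegral_prod_mul h1.aemeasurable h2.aemeasurable]
    rw [ih (fun i => μ i.succ) (fun i => g i.succ) (fun i => hg i.succ)]

lemma lintegral_fintype_prod (μ : ι → Measure ℝ) [∀ i, SigmaFinite (μ i)]
    (g : ι → ℝ → ℝ≥0∞) (hg : ∀ i, Measurable (g i)) :
    ∫⁻ x : ι → ℝ, ∏ i, g i (x i) ∂Measure.pi μ = ∏ i, ∫⁻ y, g i y ∂μ i := by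
  let e := (Fintype.equivFin ι).symm
  have hmeas : Measurable fun x : ι → ℝ => ∏ i, g i (x i) :=
    Finset.measurable_prod _ fun i _ => (hg i).comp (measurable_pi_apply i)
  rw [← (measurePreserving_piCongrLeft (fun i => μ i) e).lintegral_comp hmeas]
  simp_rw [← e.prod_comp, MeasurableEquiv.coe_piCongrLeft, Equiv.piCongrLeft_apply_apply]
  rw [lintegral_fin_prod _ _ (fun i => hg (e i))]

end basic

section lintfub
variable {ι : Type*} [Fintype ι]


lemma stdGaussian_eq_withDensity (ι : Type*) [Fintype ι] :
    stdGaussian ι = (volume : Measure (ι → ℝ)).withDensity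
      (fun x => ∏ i, gaussianPDF 0 1 (x i)) := by
  unfold _root_.stdGaussian
  refine Measure.pi_eq fun s hs => ?_
  rw [withDensity_apply _ (MeasurableSet.univ_pi hs),
    ← lintegral_indicator (MeasurableSet.univ_pi hs) _]
  have key : ∀ x : ι → ℝ, (Set.univ.pi s).indicator (fun x => ∏ i, gaussianPDF 0 1 (x i)) x
      = ∏ i, (s i).indicator (gaussianPDF 0 1) (x i) := by
    intro x
    by_cases hx : x ∈ Set.univ.pi s
    · rw [Set.indicator_of_mem hx]
      exact Finset.prod_congr rfl fun i _ =>
        (Set.indicator_of_mem (hx i (Set.mem_univ i)) _).symm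
    · rw [Set.indicator_of_notMem hx]
      obtain ⟨i, hi⟩ : ∃ i, x i ∉ s i := by simpa [Set.mem_pi] using hx
      exact (Finset.prod_eq_zero (Finset.mem_univ i)
        (Set.indicator_of_notMem hi _)).symm
  simp_rw [key]
  rw [volume_pi, lintegral_fintype_prod _ _
    (fun i => (measurable_gaussianPDF 0 1).indicator (hs i))]
  refine Finset.prod_congr rfl fun i _ => ?_
  rw [lintegral_indicator (hs i) _, gaussianReal_of_var_ne_zero 0 one_ne_zero,
    withDensity_apply _ (hs i)]

end lintfub

section L1
variable {ι : Type*} [Fintype ι] [DecidableEq ι]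

lemma withDensity_map_equiv {α β : Type*} [MeasurableSpace α] [MeasurableSpace β]
    (μ : Measure α) (e : α ≃ᵐ β) {f : α → ℝ≥0∞} (hf : Measurable f) :
    (μ.withDensity f).map e = (μ.map e).withDensity (f ∘ e.symm) := by
  ext s hs
  rw [Measure.map_apply e.measurable hs, withDensity_apply _ (e.measurable hs),
    withDensity_apply _ hs, Measure.restrict_map e.measurable hs,
    lintegral_map (hf.comp e.symm.measurable) e.measurable]
  refine lintegral_congr fun x => ?_
  simp


/-- The measurable equivalence given by an orthogonal matrix. -/
def mulVecEquiv (O : Matrix ι ι ℝ) (hO : O * Oᵀ = 1) : (ι → ℝ) ≃ᵐ (ι → ℝ) where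
  toFun := O.mulVec
  invFun := Oᵀ.mulVec
  left_inv := fun x => by
    rw [Matrix.mulVec_mulVec, mul_eq_one_comm.mp hO, Matrix.one_mulVec]
  right_inv := fun x => by rw [Matrix.mulVec_mulVec, hO, Matrix.one_mulVec]
  measurable_toFun := measurable_mulVec O
  measurable_invFun := measurable_mulVec Oᵀ

lemma sum_sq_mulVec (O : Matrix ι ι ℝ) (hO : O * Oᵀ = 1) (x : ι → ℝ) :
    ∑ i, (O.mulVec x i) ^ 2 = ∑ i, (x i) ^ 2 := by
  have h1 : ∀ y : ι → ℝ, ∑ i, (y i) ^ 2 = y ⬝ᵥ y := by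
    intro y; simp [dotProduct, pow_two]
  rw [h1, h1, Matrix.dotProduct_mulVec, ← Matrix.mulVec_transpose,
    Matrix.mulVec_mulVec, mul_eq_one_comm.mp hO, Matrix.one_mulVec]

lemma prod_gaussianPDF_mulVec (O : Matrix ι ι ℝ) (hO : O * Oᵀ = 1) (x : ι → ℝ) :
    ∏ i, gaussianPDF 0 1 (O.mulVec x i) = ∏ i, gaussianPDF 0 1 (x i) := by
  have key : ∀ y : ι → ℝ, ∏ i, gaussianPDFReal 0 1 (y i)
      = (Real.sqrt (2 * Real.pi))⁻¹ ^ (Fintype.card ι)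
        * Real.exp (-(∑ i, (y i) ^ 2) / 2) := by
    intro y
    simp only [gaussianPDFReal, NNReal.coe_one, mul_one, sub_zero]
    rw [Finset.prod_mul_distrib, Finset.prod_const, ← Real.exp_sum, Finset.card_univ]
    congr 1
    rw [← Finset.sum_div, ← Finset.sum_neg_distrib]
  simp only [gaussianPDF]
  rw [← ENNReal.ofReal_prod_of_nonneg (fun i _ => gaussianPDFReal_nonneg 0 1 _),
    ← ENNReal.ofReal_prod_of_nonneg (fun i _ => gaussianPDFReal_nonneg 0 1 _),
    key, key, sum_sq_mulVec O hO]

lemma map_mulVec_stdGaussian (O : Matrix ι ι ℝ) (hO : O * Oᵀ = 1) :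
    (stdGaussian ι).map (O.mulVec) = stdGaussian ι := by
  have hdet2 : O.det ^ 2 = 1 := by
    have := congrArg Matrix.det hO
    rwa [Matrix.det_mul, Matrix.det_transpose, Matrix.det_one, ← pow_two] at this
  have hdet : |O.det| = 1 := by
    have h3 : (|O.det| - 1) * (|O.det| + 1) = 0 := by nlinarith [sq_abs O.det]
    rcases mul_eq_zero.mp h3 with h | h
    · linarith
    · nlinarith [abs_nonneg O.det]
  have hdetne : O.det ≠ 0 := by
    intro h; rw [h, abs_zero] at hdet; exact zero_ne_one hdet
  have hvol : (volume : Measure (ι → ℝ)).map (O.mulVec) = volume := by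
    have h := Real.map_matrix_volume_pi_eq_smul_volume_pi hdetne
    rw [show ⇑(Matrix.toLin' O) = O.mulVec from funext fun v => Matrix.toLin'_apply O v] at h
    rw [h, abs_inv, hdet, inv_one, ENNReal.ofReal_one, one_smul]
  have hD : Measurable fun x : ι → ℝ => ∏ i, gaussianPDF 0 1 (x i) :=
    Finset.measurable_prod _ fun i _ =>
      (measurable_gaussianPDF 0 1).comp (measurable_pi_apply i)
  rw [stdGaussian_eq_withDensity]
  have hmap := withDensity_map_equiv (volume : Measure (ι → ℝ)) (mulVecEquiv O hO) hD
  have hco : (fun x : ι → ℝ => ∏ i, gaussianPDF 0 1 (x i)) ∘ (mulVecEquiv O hO).symm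
      = fun x : ι → ℝ => ∏ i, gaussianPDF 0 1 (x i) := by
    funext y
    calc (fun x : ι → ℝ => ∏ i, gaussianPDF 0 1 (x i)) ((mulVecEquiv O hO).symm y)
        = ∏ i, gaussianPDF 0 1 (O.mulVec ((mulVecEquiv O hO).symm y) i) :=
          (prod_gaussianPDF_mulVec O hO ((mulVecEquiv O hO).symm y)).symm
      _ = ∏ i, gaussianPDF 0 1 (y i) := by
          rw [show O.mulVec ((mulVecEquiv O hO).symm y)
            = (mulVecEquiv O hO) ((mulVecEquiv O hO).symm y) from rfl,
            MeasurableEquiv.apply_symm_apply]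
  calc ((volume : Measure (ι → ℝ)).withDensity
        (fun x => ∏ i, gaussianPDF 0 1 (x i))).map (O.mulVec)
      = ((volume : Measure (ι → ℝ)).withDensity
        (fun x => ∏ i, gaussianPDF 0 1 (x i))).map (mulVecEquiv O hO) := rfl
    _ = ((volume : Measure (ι → ℝ)).map (mulVecEquiv O hO)).withDensity
        ((fun x => ∏ i, gaussianPDF 0 1 (x i)) ∘ (mulVecEquiv O hO).symm) := hmap
    _ = (volume : Measure (ι → ℝ)).withDensity (fun x => ∏ i, gaussianPDF 0 1 (x i)) := by
        rw [hco, show (volume : Measure (ι → ℝ)).map (mulVecEquiv O hO) = volume from hvol]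

end L1

section L3
variable {ι γ : Type*} [Fintype ι] [Fintype γ] [DecidableEq ι] [DecidableEq γ]

lemma inner_toEuclideanLin (X : Matrix ι γ ℝ) (v w : EuclideanSpace ℝ ι) :
    inner ℝ (Matrix.toEuclideanLin Xᵀ v) (Matrix.toEuclideanLin Xᵀ w)
      = (v : ι → ℝ) ⬝ᵥ ((X * Xᵀ).mulVec (w : ι → ℝ)) := by
  have hv : (Matrix.toEuclideanLin Xᵀ v : γ → ℝ) = Xᵀ.mulVec (v : ι → ℝ) := rfl
  have hw : (Matrix.toEuclideanLin Xᵀ w : γ → ℝ) = Xᵀ.mulVec (w : ι → ℝ) := rfl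
  rw [PiLp.inner_apply]
  simp only [RCLike.inner_apply, starRingEnd_apply, star_trivial]
  show (Xᵀ.mulVec (w : ι → ℝ)) ⬝ᵥ (Xᵀ.mulVec (v : ι → ℝ)) = _
  rw [dotProduct_comm]
  rw [Matrix.dotProduct_mulVec, ← Matrix.mulVec_transpose, Matrix.transpose_transpose,
    Matrix.mulVec_mulVec]
  conv_rhs => rw [Matrix.dotProduct_mulVec, ← Matrix.mulVec_transpose, Matrix.transpose_mul,
    Matrix.transpose_transpose]

lemma exists_orthogonal_of_gram_eq (X Y : Matrix ι γ ℝ) (h : X * Xᵀ = Y * Yᵀ) :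
    ∃ O : Matrix γ γ ℝ, O * Oᵀ = 1 ∧ Y = X * O := by
  classical
  set gX : EuclideanSpace ℝ ι →ₗ[ℝ] EuclideanSpace ℝ γ := Matrix.toEuclideanLin Xᵀ with hgX
  set gY : EuclideanSpace ℝ ι →ₗ[ℝ] EuclideanSpace ℝ γ := Matrix.toEuclideanLin Yᵀ with hgY
  have hinner : ∀ v w, (inner ℝ (gX v) (gX w) : ℝ) = inner ℝ (gY v) (gY w) := by
    intro v w
    rw [hgX, hgY, inner_toEuclideanLin, inner_toEuclideanLin, h]
  have hnorm : ∀ v, ‖gX v‖ = ‖gY v‖ := by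
    intro v
    rw [← Real.sqrt_sq (norm_nonneg (gX v)), ← Real.sqrt_sq (norm_nonneg (gY v)),
      ← real_inner_self_eq_norm_sq, ← real_inner_self_eq_norm_sq, hinner]
  have hker : LinearMap.ker gX ≤ LinearMap.ker gY := by
    intro v hv
    rw [LinearMap.mem_ker] at hv ⊢
    have := hnorm v
    rw [hv, norm_zero] at this
    exact norm_eq_zero.mp this.symm
  -- the isometry on the range of gX
  let q : EuclideanSpace ℝ ι ⧸ LinearMap.ker gX →ₗ[ℝ] EuclideanSpace ℝ γ :=
    Submodule.liftQ _ gY hker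
  let φ : LinearMap.range gX →ₗ[ℝ] EuclideanSpace ℝ γ :=
    q ∘ₗ (LinearMap.quotKerEquivRange gX).symm.toLinearMap
  have hφ : ∀ v, φ ⟨gX v, LinearMap.mem_range_self gX v⟩ = gY v := by
    intro v
    have h1 : (LinearMap.quotKerEquivRange gX).symm ⟨gX v, LinearMap.mem_range_self gX v⟩
        = Submodule.Quotient.mk v := by
      rw [LinearEquiv.symm_apply_eq]
      exact Subtype.ext (LinearMap.quotKerEquivRange_apply_mk gX v).symm
    simp only [φ, LinearMap.comp_apply, LinearEquiv.coe_coe, h1]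
    exact Submodule.liftQ_apply _ gY v
  have hφiso : ∀ u : LinearMap.range gX, ‖φ u‖ = ‖u‖ := by
    rintro ⟨-, v, rfl⟩
    rw [hφ v]
    have : ‖(⟨gX v, LinearMap.mem_range_self gX v⟩ : LinearMap.range gX)‖ = ‖gX v‖ := rfl
    rw [this, hnorm]
  let Lφ : LinearMap.range gX →ₗᵢ[ℝ] EuclideanSpace ℝ γ := ⟨φ, hφiso⟩
  let L : EuclideanSpace ℝ γ →ₗᵢ[ℝ] EuclideanSpace ℝ γ := Lφ.extend
  have hL : ∀ v, L (gX v) = gY v := by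
    intro v
    have := Lφ.extend_apply ⟨gX v, LinearMap.mem_range_self gX v⟩
    rw [this]
    exact hφ v
  -- the matrix of L
  set U : Matrix γ γ ℝ := Matrix.toEuclideanLin.symm L.toLinearMap with hU
  have hUapp : ∀ v : γ → ℝ, U.mulVec v = WithLp.ofLp (L (WithLp.toLp 2 v)) := by
    intro v
    have h2 : Matrix.toEuclideanLin U = L.toLinearMap := Matrix.toEuclideanLin.apply_symm_apply _
    calc U.mulVec v = WithLp.ofLp ((Matrix.toEuclideanLin U) (WithLp.toLp 2 v)) := rfl
      _ = WithLp.ofLp (L (WithLp.toLp 2 v)) := by rw [h2]; rfl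
  have hUX : U * Xᵀ = Yᵀ := by
    have hv : ∀ v : ι → ℝ, (U * Xᵀ).mulVec v = Yᵀ.mulVec v := by
      intro v
      rw [← Matrix.mulVec_mulVec, hUapp]
      exact congrArg WithLp.ofLp (hL (WithLp.toLp 2 v))
    apply Matrix.toLin'.injective
    exact LinearMap.ext fun v => by
      rw [Matrix.toLin'_apply, Matrix.toLin'_apply]; exact hv v
  have hUtU : Uᵀ * U = 1 := by
    ext i j
    have hiso := L.inner_map_map (EuclideanSpace.single i (1:ℝ)) (EuclideanSpace.single j 1)
    have hLs : ∀ k : γ, L (EuclideanSpace.single k (1:ℝ))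
        = WithLp.toLp 2 (U.mulVec (Pi.single k 1)) := by
      intro k; rw [hUapp]; rfl
    rw [hLs, hLs, EuclideanSpace.inner_single_left, PiLp.inner_apply] at hiso
    simp only [RCLike.inner_apply, starRingEnd_apply, star_trivial, Matrix.mulVec_single,
      mul_one, one_mul, EuclideanSpace.single_apply] at hiso
    rw [Matrix.mul_apply, Matrix.one_apply]
    simp only [Matrix.transpose_apply]
    simp only [MulOpposite.op_one, one_smul] at hiso
    rw [← hiso]; exact Finset.sum_congr rfl fun _ _ => mul_comm _ _
  refine ⟨Uᵀ, ?_, ?_⟩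
  · rw [Matrix.transpose_transpose]; exact hUtU
  · calc Y = (Yᵀ)ᵀ := (Matrix.transpose_transpose Y).symm
      _ = (U * Xᵀ)ᵀ := by rw [hUX]
      _ = X * Uᵀ := by rw [Matrix.transpose_mul, Matrix.transpose_transpose]

end L3
section pad
variable {ι α β : Type*} [Fintype ι] [Fintype α] [Fintype β]

lemma map_comp_inl_stdGaussian (α β : Type*) [Fintype α] [Fintype β] :
    (stdGaussian (α ⊕ β)).map (fun x => x ∘ Sum.inl) = stdGaussian α := by
  have h := measurePreserving_sumPiEquivProdPi (fun _ : α ⊕ β => gaussianReal 0 1)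
  have hcomp : (fun x : (α ⊕ β) → ℝ => x ∘ Sum.inl)
      = Prod.fst ∘ (MeasurableEquiv.sumPiEquivProdPi (fun _ : α ⊕ β => ℝ)) := rfl
  rw [hcomp, ← Measure.map_map measurable_fst (MeasurableEquiv.measurable _)]
  rw [show (stdGaussian (α ⊕ β)).map (MeasurableEquiv.sumPiEquivProdPi (fun _ : α ⊕ β => ℝ))
    = (stdGaussian α).prod (stdGaussian β) from h.map_eq]
  simp [_root_.stdGaussian]

lemma map_comp_inr_stdGaussian (α β : Type*) [Fintype α] [Fintype β] :
    (stdGaussian (α ⊕ β)).map (fun x => x ∘ Sum.inr) = stdGaussian β := by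
  have h := measurePreserving_sumPiEquivProdPi (fun _ : α ⊕ β => gaussianReal 0 1)
  have hcomp : (fun x : (α ⊕ β) → ℝ => x ∘ Sum.inr)
      = Prod.snd ∘ (MeasurableEquiv.sumPiEquivProdPi (fun _ : α ⊕ β => ℝ)) := rfl
  rw [hcomp, ← Measure.map_map measurable_snd (MeasurableEquiv.measurable _)]
  rw [show (stdGaussian (α ⊕ β)).map (MeasurableEquiv.sumPiEquivProdPi (fun _ : α ⊕ β => ℝ))
    = (stdGaussian α).prod (stdGaussian β) from h.map_eq]
  simp [_root_.stdGaussian]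

lemma map_fromColumns_left (M : Matrix ι α ℝ) (β : Type*) [Fintype β] :
    (stdGaussian (α ⊕ β)).map ((Matrix.fromCols M (0 : Matrix ι β ℝ)).mulVec)
      = (stdGaussian α).map M.mulVec := by
  have hf : (Matrix.fromCols M (0 : Matrix ι β ℝ)).mulVec
      = M.mulVec ∘ (fun x : (α ⊕ β) → ℝ => x ∘ Sum.inl) := by
    funext x
    have := Matrix.fromCols_mulVec_sumElim M (0 : Matrix ι β ℝ) (x ∘ Sum.inl) (x ∘ Sum.inr)
    rw [Sum.elim_comp_inl_inr] at this
    simp only [Function.comp_apply]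
    rw [this, Matrix.zero_mulVec, add_zero]
  rw [hf, ← Measure.map_map (measurable_mulVec M) (by
    exact measurable_pi_lambda _ fun i => measurable_pi_apply _),
    map_comp_inl_stdGaussian]

lemma map_fromColumns_right (N : Matrix ι β ℝ) (α : Type*) [Fintype α] :
    (stdGaussian (α ⊕ β)).map ((Matrix.fromCols (0 : Matrix ι α ℝ) N).mulVec)
      = (stdGaussian β).map N.mulVec := by
  have hf : (Matrix.fromCols (0 : Matrix ι α ℝ) N).mulVec
      = N.mulVec ∘ (fun x : (α ⊕ β) → ℝ => x ∘ Sum.inr) := by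
    funext x
    have := Matrix.fromCols_mulVec_sumElim (0 : Matrix ι α ℝ) N (x ∘ Sum.inl) (x ∘ Sum.inr)
    rw [Sum.elim_comp_inl_inr] at this
    simp only [Function.comp_apply]
    rw [this, Matrix.zero_mulVec, zero_add]
  rw [hf, ← Measure.map_map (measurable_mulVec N) (by
    exact measurable_pi_lambda _ fun i => measurable_pi_apply _),
    map_comp_inr_stdGaussian]

/-- The pushforward of the standard Gaussian under `M.mulVec` only depends on `M * Mᵀ`. -/
lemma map_mulVec_stdGaussian_eq_of_gram_eq [DecidableEq ι] [DecidableEq α] [DecidableEq β]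
    (M : Matrix ι α ℝ) (N : Matrix ι β ℝ) (h : M * Mᵀ = N * Nᵀ) :
    (stdGaussian α).map M.mulVec = (stdGaussian β).map N.mulVec := by
  set X := Matrix.fromCols M (0 : Matrix ι β ℝ)
  set Y := Matrix.fromCols (0 : Matrix ι α ℝ) N
  have hgram : X * Xᵀ = Y * Yᵀ := by
    simp only [X, Y, Matrix.transpose_fromCols, Matrix.fromCols_mul_fromRows,
      Matrix.transpose_zero, Matrix.mul_zero, Matrix.zero_mul, add_zero, zero_add, h]
  obtain ⟨O, hO, hYX⟩ := exists_orthogonal_of_gram_eq X Y hgram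
  calc (stdGaussian α).map M.mulVec
      = (stdGaussian (α ⊕ β)).map X.mulVec := (map_fromColumns_left M β).symm
    _ = ((stdGaussian (α ⊕ β)).map O.mulVec).map X.mulVec := by
        rw [map_mulVec_stdGaussian O hO]
    _ = (stdGaussian (α ⊕ β)).map (X.mulVec ∘ O.mulVec) := by
        rw [Measure.map_map (measurable_mulVec X) (measurable_mulVec O)]
    _ = (stdGaussian (α ⊕ β)).map Y.mulVec := by
        congr 1
        funext v
        rw [Function.comp_apply, Matrix.mulVec_mulVec, ← hYX]
    _ = (stdGaussian β).map N.mulVec := map_fromColumns_right N α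

end pad


section final2
variable {ι : Type*} [Fintype ι] [DecidableEq ι]

lemma real_conjTranspose {m n : Type*} (M : Matrix m n ℝ) : Mᴴ = Mᵀ :=
  Matrix.ext fun _ _ => rfl

lemma matSqrt_mul_transpose {S : Matrix ι ι ℝ} (hS : S.PosSemidef) :
    matSqrt S * (matSqrt S)ᵀ = S := by
  have hU : (star hS.1.eigenvectorUnitary : Matrix ι ι ℝ) * hS.1.eigenvectorUnitary.1 = 1 :=
    Unitary.coe_star_mul_self _
  have hst : (star hS.1.eigenvectorUnitary : Matrix ι ι ℝ) = (hS.1.eigenvectorUnitary.1)ᵀ := by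
    rw [Matrix.star_eq_conjTranspose, real_conjTranspose]
  have hD : diagonal ((↑) ∘ (√·) ∘ hS.1.eigenvalues) * diagonal ((↑) ∘ (√·) ∘ hS.1.eigenvalues)
      = diagonal (RCLike.ofReal ∘ hS.1.eigenvalues : ι → ℝ) := by
    rw [Matrix.diagonal_mul_diagonal]
    congr 1
    funext i
    simp [Real.mul_self_sqrt (hS.eigenvalues_nonneg i)]
  rw [show matSqrt S = _ from dif_pos hS]
  conv_rhs => rw [hS.1.spectral_theorem, Unitary.conjStarAlgAut_apply]
  rw [hst] at hU ⊢
  rw [Matrix.transpose_mul, Matrix.transpose_mul, Matrix.transpose_transpose,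
    Matrix.diagonal_transpose]
  simp only [Matrix.mul_assoc]
  rw [← Matrix.mul_assoc (hS.1.eigenvectorUnitary.1)ᵀ, hU, Matrix.one_mul, ← Matrix.mul_assoc (diagonal _), hD]

lemma multiGaussian_zero (S : Matrix ι ι ℝ) :
    multiGaussian 0 S = (stdGaussian ι).map (matSqrt S).mulVec := by
  unfold multiGaussian
  simp only [zero_add]

end final2

end aux

/-- **Finite-dimensional form of Proposition 1.** Identify `ℝ^{p+q}` with
`(Fin p ⊕ Fin q) → ℝ` (first block: the `p` source points, second block: the
`q` target points). If `(x₁, x₂) ~ N(0, A)` jointly with `A` positive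
semidefinite, and independently `z ~ N(0, C)` with `C` positive semidefinite,
then the image of the pair under `T((x₁, x₂), z) = (x₁, x₂ + z)` is `N(0, B)`
where `B₁₁ = A₁₁`, `B₁₂ = A₁₂`, `B₂₁ = A₂₁` and `B₂₂ = A₂₂ + C`, i.e.
`B = A + fromBlocks 0 0 0 C`. -/
theorem hierarchical_joint_gaussian (p q : ℕ)
    (A : Matrix (Fin p ⊕ Fin q) (Fin p ⊕ Fin q) ℝ) (hA : A.PosSemidef)
    (C : Matrix (Fin q) (Fin q) ℝ) (hC : C.PosSemidef) :
    ((multiGaussian 0 A).prod (multiGaussian 0 C)).map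
        (fun w : ((Fin p ⊕ Fin q) → ℝ) × (Fin q → ℝ) =>
          w.1 + Sum.elim (0 : Fin p → ℝ) w.2)
      = multiGaussian 0 (A + Matrix.fromBlocks 0 0 0 C) := by
  set f := (matSqrt A).mulVec with hf
  set g := (matSqrt C).mulVec with hg
  set T := fun w : ((Fin p ⊕ Fin q) → ℝ) × (Fin q → ℝ) => w.1 + Sum.elim (0 : Fin p → ℝ) w.2 with hTdef
  set E := Matrix.fromRows (0 : Matrix (Fin p) (Fin q) ℝ) (matSqrt C) with hE
  set Mbig := Matrix.fromCols (matSqrt A) E with hMbig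
  set B := A + Matrix.fromBlocks (0 : Matrix (Fin p) (Fin p) ℝ) 0 0 C with hBdef
  have hEE : E * Eᵀ = Matrix.fromBlocks 0 0 0 C := by
    rw [hE, Matrix.transpose_fromRows, Matrix.fromRows_mul_fromCols,
      matSqrt_mul_transpose hC]
    simp
  have hB : B.PosSemidef := by
    refine hA.add ?_
    rw [← hEE, ← real_conjTranspose]
    exact Matrix.posSemidef_self_mul_conjTranspose E
  have hGram : Mbig * Mbigᵀ = matSqrt B * (matSqrt B)ᵀ := by
    rw [matSqrt_mul_transpose hB, hMbig, Matrix.transpose_fromCols,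
      Matrix.fromCols_mul_fromRows, matSqrt_mul_transpose hA, hEE]
  have hT : Measurable T := by
    refine measurable_pi_lambda _ fun i => ?_
    cases i with
    | inl a =>
      have h1 : Measurable fun w : ((Fin p ⊕ Fin q) → ℝ) × (Fin q → ℝ) =>
          w.1 (Sum.inl a) + Sum.elim (0 : Fin p → ℝ) w.2 (Sum.inl a) := by
        simp only [Sum.elim_inl, Pi.zero_apply, add_zero]
        exact (measurable_pi_apply _).comp measurable_fst
      exact h1
    | inr b =>
      have h1 : Measurable fun w : ((Fin p ⊕ Fin q) → ℝ) × (Fin q → ℝ) =>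
          w.1 (Sum.inr b) + Sum.elim (0 : Fin p → ℝ) w.2 (Sum.inr b) := by
        simp only [Sum.elim_inr]
        exact ((measurable_pi_apply _).comp measurable_fst).add
          ((measurable_pi_apply b).comp measurable_snd)
      exact h1
  have hfm : Measurable f := measurable_mulVec _
  have hgm : Measurable g := measurable_mulVec _
  set e := MeasurableEquiv.sumPiEquivProdPi (fun _ : (Fin p ⊕ Fin q) ⊕ Fin q => ℝ) with he
  have hemp : (stdGaussian ((Fin p ⊕ Fin q) ⊕ Fin q)).map e = (stdGaussian (Fin p ⊕ Fin q)).prod (stdGaussian (Fin q)) :=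
    (measurePreserving_sumPiEquivProdPi (fun _ : (Fin p ⊕ Fin q) ⊕ Fin q => gaussianReal 0 1)).map_eq
  have hcomp : (T ∘ Prod.map f g) ∘ e = Mbig.mulVec := by
    funext x
    have hx : Mbig.mulVec x = (matSqrt A).mulVec (x ∘ Sum.inl) + E.mulVec (x ∘ Sum.inr) := by
      conv_lhs => rw [← Sum.elim_comp_inl_inr x]
      rw [hMbig, Matrix.fromCols_mulVec_sumElim]
    have hEv : E.mulVec (x ∘ Sum.inr) = Sum.elim (0 : Fin p → ℝ) (g (x ∘ Sum.inr)) := by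
      rw [hE, Matrix.fromRows_mulVec, Matrix.zero_mulVec, hg]
    rw [Function.comp_apply, Function.comp_apply, hx, hEv]
    rfl
  calc ((multiGaussian 0 A).prod (multiGaussian 0 C)).map T
      = (((stdGaussian (Fin p ⊕ Fin q)).map f).prod ((stdGaussian (Fin q)).map g)).map T := by
        rw [multiGaussian_zero, multiGaussian_zero]
    _ = (((stdGaussian (Fin p ⊕ Fin q)).prod (stdGaussian (Fin q))).map (Prod.map f g)).map T := by
        rw [Measure.map_prod_map _ _ hfm hgm]
    _ = ((stdGaussian (Fin p ⊕ Fin q)).prod (stdGaussian (Fin q))).map (T ∘ Prod.map f g) := by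
        rw [Measure.map_map hT (hfm.prodMap hgm)]
    _ = (((stdGaussian ((Fin p ⊕ Fin q) ⊕ Fin q)).map e)).map (T ∘ Prod.map f g) := by rw [hemp]
    _ = (stdGaussian ((Fin p ⊕ Fin q) ⊕ Fin q)).map ((T ∘ Prod.map f g) ∘ e) := by
        rw [Measure.map_map (hT.comp (hfm.prodMap hgm)) (MeasurableEquiv.measurable _)]
    _ = (stdGaussian ((Fin p ⊕ Fin q) ⊕ Fin q)).map Mbig.mulVec := by rw [hcomp]
    _ = (stdGaussian (Fin p ⊕ Fin q)).map (matSqrt B).mulVec :=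
        map_mulVec_stdGaussian_eq_of_gram_eq Mbig (matSqrt B) hGram
    _ = multiGaussian 0 B := (multiGaussian_zero B).symm
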